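/- Fix k ≥ 3 and 0 ≤ i ≤ k-1, and let (d_p) be the positive solution of the recurrence d_{p+1} = ((i+pk)!/√((i+pk-k)!·(i+pk+k)!))·d_{p-1} + √((i+pk)!/(i+pk+k)!)·d_p with d_{-1}=0, d_0=1. Then ∑_{p=0}^∞ d_p² < ∞. -/

import Mathlib

open Nat

lemma hmul_aux (c b : ℕ) (h : c + 7 ≤ b) : (c + 1) * (b + 1) ^ 3 ≤ (b + 1) * b ^ 3 := by
  obtain ⟨t, rfl⟩ := Nat.exists_eq_add_of_le h
  nlinarith [sq_nonneg c, sq_nonneg t, Nat.zero_le (c * t)]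

lemma fact_ineq1 (k : ℕ) (hk : 3 ≤ k) :
    ∀ c : ℕ, ((k + c)!) ^ 2 * (2 * k + c) ^ 3 ≤ c ! * ((2 * k + c)!) * (k + c) ^ 3 := by
  induction k, hk using Nat.le_induction with
  | base =>
    intro c
    rw [show 3 + c = c + 3 from by omega, show 2 * 3 + c = c + 6 from by omega]
    have h1 : (c + 3)! = (c + 3) * ((c + 2) * ((c + 1) * c !)) := by
      rw [Nat.factorial_succ, Nat.factorial_succ, Nat.factorial_succ]
    have h2 : (c + 6)! = (c + 6) * ((c + 5) * ((c + 4) * (c + 3)!)) := by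
      rw [Nat.factorial_succ, Nat.factorial_succ, Nat.factorial_succ]
    have key : (c + 1) * ((c + 2) * ((c + 3) * (c + 6) ^ 3)) ≤
        (c + 4) * ((c + 5) * ((c + 6) * (c + 3) ^ 3)) := by nlinarith [sq_nonneg c]
    calc ((c + 3)!) ^ 2 * (c + 6) ^ 3
        = ((c + 1) * ((c + 2) * ((c + 3) * (c + 6) ^ 3))) * (c ! * (c + 3)!) := by
          rw [h1]; ring
      _ ≤ ((c + 4) * ((c + 5) * ((c + 6) * (c + 3) ^ 3))) * (c ! * (c + 3)!) :=
          Nat.mul_le_mul_right _ key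
      _ = c ! * ((c + 6)!) * (c + 3) ^ 3 := by rw [h2]; ring
  | succ k hk ih =>
    intro c
    have H := ih (c + 1)
    have e1 : k + 1 + c = k + (c + 1) := by ring
    have e2 : 2 * (k + 1) + c = (2 * k + (c + 1)) + 1 := by ring
    rw [e1, e2, Nat.factorial_succ]
    set a := 2 * k + (c + 1) with ha
    have hmul : (c + 1) * (a + 1) ^ 3 ≤ (a + 1) * a ^ 3 :=
      hmul_aux c a (by omega)
    have hfinal : ((k + (c + 1))!) ^ 2 * (a + 1) ^ 3 * (c + 1) ≤
        c ! * ((a + 1) * a !) * (k + (c + 1)) ^ 3 * (c + 1) := by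
      calc ((k + (c + 1))!) ^ 2 * (a + 1) ^ 3 * (c + 1)
          = ((k + (c + 1))!) ^ 2 * ((c + 1) * (a + 1) ^ 3) := by ring
        _ ≤ ((k + (c + 1))!) ^ 2 * ((a + 1) * a ^ 3) := Nat.mul_le_mul_left _ hmul
        _ = (((k + (c + 1))!) ^ 2 * a ^ 3) * (a + 1) := by ring
        _ ≤ ((c + 1)! * a ! * (k + (c + 1)) ^ 3) * (a + 1) := Nat.mul_le_mul_right _ H
        _ = c ! * ((a + 1) * a !) * (k + (c + 1)) ^ 3 * (c + 1) := by
            rw [Nat.factorial_succ]; ring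
    exact Nat.le_of_mul_le_mul_right hfinal (Nat.succ_pos c)

lemma fact_ineq2 (k m : ℕ) (hk : 3 ≤ k) : m ! * (m + 1) ^ 3 ≤ (m + k)! := by
  have h1 : (m + 3)! ≤ (m + k)! := Nat.factorial_le (by omega)
  have h2 : (m + 3)! = (m + 3) * ((m + 2) * ((m + 1) * m !)) := by
    rw [Nat.factorial_succ, Nat.factorial_succ, Nat.factorial_succ]
  nlinarith [Nat.zero_le (m ! * m), Nat.zero_le (m !)]


lemma core_ineq (m k j : ℝ) (hk3 : 3 ≤ k) (hkm : k ≤ m) (hj : 48 ≤ j) :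
    m ^ 3 / (m + k) ^ 3 + 3 / (j * (m + 1)) ≤ (2 * m - k) / (2 * (m + 2 * k)) := by
  have hm : (3:ℝ) ≤ m := le_trans hk3 hkm
  have hm0 : (0:ℝ) < m := by linarith
  have hk0 : (0:ℝ) < k := by linarith
  have hmk : (0:ℝ) < m + k := by linarith
  have hm2k : (0:ℝ) < m + 2 * k := by linarith
  have hj0 : (0:ℝ) < j := by linarith
  have hm1 : (0:ℝ) < m + 1 := by linarith
  have step2 : 3 / (j * (m + 1)) ≤ k / (48 * m) := by
    rw [div_le_div_iff₀ (by positivity) (by positivity)]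
    nlinarith [mul_le_mul hj (le_refl (m+1)) (le_of_lt hm1) (by linarith : (0:ℝ) ≤ j)]
  have hpos : (0:ℝ) ≤ m ^ 3 + 3 * m ^ 2 * k - m * k ^ 2 - k ^ 3 := by
    nlinarith [mul_pos hm0 hk0, mul_pos (mul_pos hm0 hm0) hk0]
  have h1 : m ^ 3 + m ^ 2 * k ≤ m ^ 3 + 3 * m ^ 2 * k - m * k ^ 2 - k ^ 3 := by
    nlinarith [mul_pos hm0 hk0, mul_pos (mul_pos hm0 hm0) hk0]
  have key : 2 * (m + 2 * k) * (m + k) ^ 3 ≤ 24 * m * (m ^ 3 + 3 * m ^ 2 * k - m * k ^ 2 - k ^ 3) := by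
    have h2 : 2 * (m + 2 * k) * (m + k) ^ 3 ≤ 24 * (m ^ 3 * (m + k)) := by
      nlinarith [mul_pos hm0 hk0, sq_nonneg (m - k), mul_pos hmk hmk,
        mul_nonneg (mul_nonneg hm0.le hk0.le) (sq_nonneg (m - k)),
        mul_nonneg (mul_nonneg hk0.le hk0.le) (sq_nonneg (m - k)),
        mul_nonneg (mul_nonneg hk0.le hk0.le) (mul_nonneg hk0.le hmk.le)]
    have h3 : 24 * (m ^ 3 * (m + k)) ≤ 24 * m * (m ^ 3 + 3 * m ^ 2 * k - m * k ^ 2 - k ^ 3) := by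
      nlinarith [mul_le_mul_of_nonneg_left h1 (by positivity : (0:ℝ) ≤ 24 * m)]
    linarith
  have keyk : 2 * k * ((m + 2 * k) * (m + k) ^ 3) ≤
      24 * m * k * (m ^ 3 + 3 * m ^ 2 * k - m * k ^ 2 - k ^ 3) := by
    nlinarith [mul_le_mul_of_nonneg_left key hk0.le]
  have h24 : (0:ℝ) ≤ 24 * m * k * (m ^ 3 + 3 * m ^ 2 * k - m * k ^ 2 - k ^ 3) :=
    mul_nonneg (by positivity) hpos
  have step1 : m ^ 3 / (m + k) ^ 3 + k / (48 * m) ≤ (2 * m - k) / (2 * (m + 2 * k)) := by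
    rw [div_add_div _ _ (by positivity) (by positivity), div_le_div_iff₀ (by positivity) (by positivity)]
    nlinarith [keyk, h24]
  linarith


lemma coeff_bounds (k c : ℕ) (hk : 3 ≤ k) (α β : ℝ)
    (hα : α = ((k + c)! : ℝ) / Real.sqrt ((c ! : ℝ) * ((2 * k + c)! : ℝ)))
    (hβ : β = Real.sqrt (((k + c)! : ℝ) / ((2 * k + c)! : ℝ))) :
    0 ≤ α ∧ α ≤ 1 ∧ 0 ≤ β ∧ β ≤ 1 ∧
    α ^ 2 ≤ (((k:ℝ) + c) ^ 3) / (((k:ℝ) + c + k) ^ 3) ∧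
    β ≤ 1 / ((Nat.sqrt (k + c + 1) : ℝ) * ((k:ℝ) + c + 1)) := by
  have f0 : (0:ℝ) < (c ! : ℝ) := by exact_mod_cast c.factorial_pos
  have f1 : (0:ℝ) < ((k + c)! : ℝ) := by exact_mod_cast (k + c).factorial_pos
  have f2 : (0:ℝ) < ((2 * k + c)! : ℝ) := by exact_mod_cast (2 * k + c).factorial_pos
  have hM : (0:ℝ) < (k:ℝ) + c := by
    have : (3:ℝ) ≤ (k:ℝ) := by exact_mod_cast hk
    positivity
  have hMK : (0:ℝ) < (k:ℝ) + c + k := by positivity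
  have hα0 : 0 ≤ α := by rw [hα]; positivity
  have hβ0 : 0 ≤ β := by rw [hβ]; exact Real.sqrt_nonneg _
  have hαsq : α ^ 2 = ((k + c)! : ℝ) ^ 2 / ((c ! : ℝ) * ((2 * k + c)! : ℝ)) := by
    rw [hα, div_pow, Real.sq_sqrt (by positivity)]
  have hα2 : α ^ 2 ≤ (((k:ℝ) + c) ^ 3) / (((k:ℝ) + c + k) ^ 3) := by
    rw [hαsq, div_le_div_iff₀ (by positivity) (by positivity)]
    have := fact_ineq1 k hk c
    have hcast : (((k + c)! : ℝ)) ^ 2 * (((2:ℝ) * k + c) ^ 3) ≤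
        (c ! : ℝ) * ((2 * k + c)! : ℝ) * (((k:ℝ) + c) ^ 3) := by exact_mod_cast this
    have e1 : ((k:ℝ) + c + k) = (2:ℝ) * k + c := by ring
    rw [e1]
    linarith [hcast]
  have hα1 : α ≤ 1 := by
    have h1 : (((k:ℝ) + c) ^ 3) / (((k:ℝ) + c + k) ^ 3) ≤ 1 := by
      rw [div_le_one (by positivity)]
      have : (3:ℝ) ≤ (k:ℝ) := by exact_mod_cast hk
      exact pow_le_pow_left₀ hM.le (by linarith) 3
    nlinarith [hα2]
  have hβsq : β ^ 2 = ((k + c)! : ℝ) / ((2 * k + c)! : ℝ) := by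
    rw [hβ, Real.sq_sqrt (by positivity)]
  have hβ1 : β ≤ 1 := by
    rw [hβ]
    have : ((k + c)! : ℝ) / ((2 * k + c)! : ℝ) ≤ 1 := by
      rw [div_le_one f2]
      exact_mod_cast Nat.factorial_le (by omega)
    calc Real.sqrt (((k + c)! : ℝ) / ((2 * k + c)! : ℝ)) ≤ Real.sqrt 1 :=
          Real.sqrt_le_sqrt this
      _ = 1 := Real.sqrt_one
  have hj : (0:ℝ) < (Nat.sqrt (k + c + 1) : ℝ) := by
    have : 1 ≤ Nat.sqrt (k + c + 1) := by
      rw [Nat.le_sqrt]; omega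
    exact_mod_cast Nat.lt_of_lt_of_le Nat.zero_lt_one this
  have hβle : β ≤ 1 / ((Nat.sqrt (k + c + 1) : ℝ) * ((k:ℝ) + c + 1)) := by
    set j : ℕ := Nat.sqrt (k + c + 1) with hjdef
    have hjsq : ((j:ℝ)) ^ 2 ≤ (k:ℝ) + c + 1 := by
      have h2 : ((j ^ 2 : ℕ) : ℝ) ≤ ((k + c + 1 : ℕ) : ℝ) := by
        exact_mod_cast Nat.sqrt_le' (k + c + 1)
      push_cast at h2 ⊢
      linarith
    have hfrac : ((k + c)! : ℝ) / ((2 * k + c)! : ℝ) ≤ (1 / ((j:ℝ) * ((k:ℝ) + c + 1))) ^ 2 := by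
      have hf2 := fact_ineq2 k (k + c) hk
      have hf2' : ((k + c)! : ℝ) * (((k:ℝ) + c + 1) ^ 3) ≤ ((2 * k + c)! : ℝ) := by
        have : (k + c)! * (k + c + 1) ^ 3 ≤ ((2 * k + c)!) := by
          have e : k + c + k = 2 * k + c := by omega
          rw [← e]; exact hf2
        exact_mod_cast this
      have hD : (0:ℝ) < (j:ℝ) * ((k:ℝ) + c + 1) := by positivity
      have hD3 : ((j:ℝ) * ((k:ℝ) + c + 1)) ^ 2 ≤ ((k:ℝ) + c + 1) ^ 3 := by
        calc ((j:ℝ) * ((k:ℝ) + c + 1)) ^ 2 = (j:ℝ) ^ 2 * ((k:ℝ) + c + 1) ^ 2 := by ring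
          _ ≤ ((k:ℝ) + c + 1) * ((k:ℝ) + c + 1) ^ 2 :=
              mul_le_mul_of_nonneg_right hjsq (sq_nonneg _)
          _ = ((k:ℝ) + c + 1) ^ 3 := by ring
      rw [div_pow, one_pow, div_le_div_iff₀ f2 (by positivity)]
      calc ((k + c)! : ℝ) * ((j:ℝ) * ((k:ℝ) + c + 1)) ^ 2
          ≤ ((k + c)! : ℝ) * ((k:ℝ) + c + 1) ^ 3 :=
            mul_le_mul_of_nonneg_left hD3 f1.le
        _ ≤ ((2 * k + c)! : ℝ) := hf2'
        _ = 1 * ((2 * k + c)! : ℝ) := by ring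
    calc β = Real.sqrt (((k + c)! : ℝ) / ((2 * k + c)! : ℝ)) := hβ
      _ ≤ Real.sqrt ((1 / ((j:ℝ) * ((k:ℝ) + c + 1))) ^ 2) := Real.sqrt_le_sqrt hfrac
      _ = 1 / ((j:ℝ) * ((k:ℝ) + c + 1)) := Real.sqrt_sq (by positivity)
  exact ⟨hα0, hα1, hβ0, hβ1, hα2, hβle⟩

lemma contraction_bound (k c : ℕ) (hk : 3 ≤ k) (hc : 2400 ≤ c) (α β : ℝ)
    (hα : α = ((k + c)! : ℝ) / Real.sqrt ((c ! : ℝ) * ((2 * k + c)! : ℝ)))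
    (hβ : β = Real.sqrt (((k + c)! : ℝ) / ((2 * k + c)! : ℝ))) :
    α ^ 2 + 3 * β ≤ (((k:ℝ) + c) / ((k:ℝ) + c + 2 * k)) ^ ((5:ℝ)/4) := by
  obtain ⟨hα0, hα1, hβ0, hβ1, hα2, hβle⟩ := coeff_bounds k c hk α β hα hβ
  set M : ℝ := (k:ℝ) + c with hM
  set K : ℝ := (k:ℝ) with hK
  have hK3 : (3:ℝ) ≤ K := by rw [hK]; exact_mod_cast hk
  have hKM : K ≤ M := by
    have : (0:ℝ) ≤ (c:ℝ) := Nat.cast_nonneg c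
    rw [hM]; linarith
  have hM0 : (0:ℝ) < M := by linarith
  have hM2K : (0:ℝ) < M + 2 * K := by linarith
  have hj48 : (48:ℝ) ≤ (Nat.sqrt (k + c + 1) : ℝ) := by
    have : 48 ≤ Nat.sqrt (k + c + 1) := by
      rw [Nat.le_sqrt]; omega
    exact_mod_cast this
  have hcore := core_ineq M K (Nat.sqrt (k + c + 1) : ℝ) hK3 hKM hj48
  have hchain : α ^ 2 + 3 * β ≤ (2 * M - K) / (2 * (M + 2 * K)) := by
    have h3β : 3 * β ≤ 3 / ((Nat.sqrt (k + c + 1) : ℝ) * (M + 1)) := by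
      have : β ≤ 1 / ((Nat.sqrt (k + c + 1) : ℝ) * (M + 1)) := hβle
      rw [div_eq_mul_inv, mul_comm (3:ℝ)]
      rw [one_div] at this
      nlinarith [this]
    linarith [hα2, hcore, h3β]
  -- Bernoulli
  have hs : (-1:ℝ) ≤ -(2 * K) / (M + 2 * K) := by
    rw [neg_le, neg_div, neg_neg, div_le_one hM2K]; linarith
  have hber := one_add_mul_self_le_rpow_one_add hs (by norm_num : (1:ℝ) ≤ (5:ℝ)/4)
  have e1 : 1 + (5:ℝ)/4 * (-(2 * K) / (M + 2 * K)) = (2 * M - K) / (2 * (M + 2 * K)) := by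
    field_simp; ring
  have e2 : 1 + -(2 * K) / (M + 2 * K) = M / (M + 2 * K) := by
    field_simp
    ring
  rw [e1, e2] at hber
  exact le_trans hchain hber


lemma sq_step (α β x y w : ℝ) (hα0 : 0 ≤ α) (hα1 : α ≤ 1) (hβ0 : 0 ≤ β) (hβ1 : β ≤ 1)
    (h : w = α * x + β * y) : w ^ 2 ≤ (α ^ 2 + β) * x ^ 2 + 2 * β * y ^ 2 := by
  subst h
  nlinarith [mul_nonneg (mul_nonneg hα0 hβ0) (sq_nonneg (x - y)),
    mul_nonneg hβ0 (sq_nonneg (x - y)),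
    mul_nonneg (mul_nonneg (sub_nonneg.2 hα1) hβ0) (add_nonneg (sq_nonneg x) (sq_nonneg y)),
    mul_nonneg (mul_nonneg (sub_nonneg.2 hβ1) hβ0) (sq_nonneg y)]

set_option maxRecDepth 8000 in
/-- Square summability of `(d_p)`. -/
theorem stmt_11 (k i : ℕ) (hk : 3 ≤ k) (hi : i ≤ k - 1) (d : ℕ → ℝ)
    (hd0 : d 0 = 1)
    (hrec : ∀ p : ℕ, d (p + 1) =
      ((i + p * k)! : ℝ) /
          Real.sqrt (((i + p * k - k)! : ℝ) * ((i + p * k + k)! : ℝ)) *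
          (if p = 0 then 0 else d (p - 1))
        + Real.sqrt (((i + p * k)! : ℝ) / ((i + p * k + k)! : ℝ)) * d p) :
    Summable (fun p : ℕ => d p ^ 2) := by
  have hk3R : (3:ℝ) ≤ (k:ℝ) := by exact_mod_cast hk
  -- coefficient sequences
  set A : ℕ → ℝ := fun q => ((k + (i + q * k))! : ℝ) /
      Real.sqrt (((i + q * k)! : ℝ) * ((2 * k + (i + q * k))! : ℝ)) with hAdef
  set B : ℕ → ℝ := fun q =>
      Real.sqrt (((k + (i + q * k))! : ℝ) / ((2 * k + (i + q * k))! : ℝ)) with hBdef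
  -- clean recurrence
  have hrec2 : ∀ q : ℕ, d (q + 2) = A q * d q + B q * d (q + 1) := by
    intro q
    have h := hrec (q + 1)
    rw [if_neg (Nat.succ_ne_zero q)] at h
    rw [show (q + 1) * k = q * k + k from by ring] at h
    rw [show i + (q * k + k) - k = i + q * k from by omega] at h
    rw [show i + (q * k + k) = k + (i + q * k) from by omega] at h
    rw [show k + (i + q * k) + k = 2 * k + (i + q * k) from by omega] at h
    simpa [hAdef, hBdef] using h
  -- bounds on coefficients
  have hcb : ∀ q : ℕ, 0 ≤ A q ∧ A q ≤ 1 ∧ 0 ≤ B q ∧ B q ≤ 1 ∧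
      A q ^ 2 ≤ (((k:ℝ) + (i + q * k : ℕ)) ^ 3) / (((k:ℝ) + (i + q * k : ℕ) + k) ^ 3) ∧
      B q ≤ 1 / ((Nat.sqrt (k + (i + q * k) + 1) : ℝ) * ((k:ℝ) + (i + q * k : ℕ) + 1)) :=
    fun q => coeff_bounds k (i + q * k) hk (A q) (B q) rfl rfl
  -- real sequence g q = n_q + k
  set g : ℕ → ℝ := fun q => (k:ℝ) + (i:ℝ) + q * (k:ℝ) with hgdef
  have hgcast : ∀ q : ℕ, (k:ℝ) + ((i + q * k : ℕ) : ℝ) = g q := by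
    intro q; simp only [hgdef]; push_cast; ring
  have hgsucc : ∀ q : ℕ, g (q + 1) = g q + k := by
    intro q; simp only [hgdef]; push_cast; ring
  have hgpos : ∀ q : ℕ, 0 < g q := by
    intro q; simp only [hgdef]
    nlinarith [Nat.cast_nonneg (α := ℝ) i, Nat.cast_nonneg (α := ℝ) q, hk3R,
      mul_nonneg (Nat.cast_nonneg (α := ℝ) q) (Nat.cast_nonneg (α := ℝ) k)]
  set Z : ℕ → ℝ := fun q => g q / (g q + k) with hZdef
  set T : ℕ → ℝ := fun q => Z q ^ ((5:ℝ)/4) with hTdef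
  set W : ℕ → ℝ := fun q => (g q + k) ^ (-((5:ℝ)/4)) with hWdef
  have hZpos : ∀ q, 0 < Z q := by
    intro q; simp only [hZdef]
    have := hgpos q; positivity
  have hZle1 : ∀ q, Z q ≤ 1 := by
    intro q; simp only [hZdef]
    rw [div_le_one (by nlinarith [hgpos q])]
    linarith [hgpos q]
  have hTpos : ∀ q, 0 < T q := fun q => Real.rpow_pos_of_pos (hZpos q) _
  have hTle1 : ∀ q, T q ≤ 1 := fun q =>
    Real.rpow_le_one (hZpos q).le (hZle1 q) (by norm_num)
  have hWpos : ∀ q, 0 < W q := by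
    intro q; simp only [hWdef]
    exact Real.rpow_pos_of_pos (by linarith [hgpos q]) _
  -- product of consecutive T's
  have hTT : ∀ q, T q * T (q + 1) = (g q / (g q + 2 * k)) ^ ((5:ℝ)/4) := by
    intro q
    have h1 : g q + (k:ℝ) > 0 := by linarith [hgpos q]
    have h2 : g q + (k:ℝ) + k > 0 := by linarith [hgpos q]
    have hbase : Z q * Z (q + 1) = g q / (g q + 2 * k) := by
      simp only [hZdef]
      rw [hgsucc q, _root_.div_mul_div_comm,
        div_eq_div_iff (by nlinarith [hgpos q, hk3R] : (0:ℝ) < (g q + k) * (g q + k + k)).ne'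
          (by nlinarith [hgpos q, hk3R] : (0:ℝ) < g q + 2 * k).ne']
      ring
    simp only [hTdef]
    rw [← Real.mul_rpow (hZpos q).le (hZpos (q+1)).le, hbase]
  -- telescoping with W
  have hTW : ∀ q, T (q + 1) * W q = W (q + 1) := by
    intro q
    simp only [hTdef, hWdef, hZdef]
    rw [hgsucc q]
    have h1 : (0:ℝ) < g q + k := by linarith [hgpos q]
    have h2 : (0:ℝ) < g q + k + k := by linarith [hgpos q]
    rw [Real.div_rpow h1.le h2.le, Real.rpow_neg h1.le, Real.rpow_neg h2.le]
    have h3 : (g q + k) ^ ((5:ℝ)/4) ≠ 0 := (Real.rpow_pos_of_pos h1 _).ne'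
    have h4 : (g q + k + k) ^ ((5:ℝ)/4) ≠ 0 := (Real.rpow_pos_of_pos h2 _).ne'
    field_simp
  -- squared-step inequality
  have husq : ∀ q : ℕ, d (q + 2) ^ 2 ≤ (A q ^ 2 + B q) * d q ^ 2 + 2 * B q * d (q + 1) ^ 2 := by
    intro q
    obtain ⟨h1, h2, h3, h4, _, _⟩ := hcb q
    exact sq_step (A q) (B q) (d q) (d (q+1)) (d (q+2)) h1 h2 h3 h4 (hrec2 q)
  -- the contraction quantity
  have hcontrkey : ∀ q : ℕ, 800 ≤ q → A q ^ 2 + 3 * B q ≤ T q * T (q + 1) := by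
    intro q hq
    have hcq : 2400 ≤ i + q * k := by
      have : 800 * 3 ≤ q * k := Nat.mul_le_mul hq hk
      omega
    have hcb2 := contraction_bound k (i + q * k) hk hcq (A q) (B q) rfl rfl
    rw [hTT q]
    have e1 : ((k:ℝ) + ((i + q * k : ℕ):ℝ)) / ((k:ℝ) + ((i + q * k : ℕ):ℝ) + 2 * k)
        = g q / (g q + 2 * k) := by rw [hgcast q]
    rwa [e1] at hcb2
  -- the max sequence
  set S : ℕ → ℝ := fun q => max (d (q + 1) ^ 2) (T q * d q ^ 2) with hSdef
  have hS0 : ∀ q, 0 ≤ S q := fun q => le_trans (sq_nonneg _) (le_max_left _ _)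
  have hSu : ∀ q, d (q + 1) ^ 2 ≤ S q := fun q => le_max_left _ _
  have hSt : ∀ q, T q * d q ^ 2 ≤ S q := fun q => le_max_right _ _
  -- contraction of S
  have hScontr : ∀ q : ℕ, 800 ≤ q → S (q + 1) ≤ T (q + 1) * S q := by
    intro q hq
    obtain ⟨hA0, hA1, hB0, hB1, _, _⟩ := hcb q
    have hmain : d (q + 2) ^ 2 ≤ T (q + 1) * S q := by
      have hTq := hTpos q
      have step1 : T q * d (q + 2) ^ 2 ≤ T q * (T (q + 1) * S q) := by
        calc T q * d (q + 2) ^ 2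
            ≤ T q * ((A q ^ 2 + B q) * d q ^ 2 + 2 * B q * d (q + 1) ^ 2) :=
              mul_le_mul_of_nonneg_left (husq q) hTq.le
          _ = (A q ^ 2 + B q) * (T q * d q ^ 2) + 2 * B q * T q * d (q + 1) ^ 2 := by ring
          _ ≤ (A q ^ 2 + B q) * S q + 2 * B q * T q * S q := by
              have c1 : (A q ^ 2 + B q) * (T q * d q ^ 2) ≤ (A q ^ 2 + B q) * S q :=
                mul_le_mul_of_nonneg_left (hSt q) (by positivity)
              have c2 : 2 * B q * T q * d (q + 1) ^ 2 ≤ 2 * B q * T q * S q :=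
                mul_le_mul_of_nonneg_left (hSu q) (by positivity)
              linarith
          _ = (A q ^ 2 + B q + 2 * B q * T q) * S q := by ring
          _ ≤ (A q ^ 2 + 3 * B q) * S q := by
              have : A q ^ 2 + B q + 2 * B q * T q ≤ A q ^ 2 + 3 * B q := by
                nlinarith [hTle1 q, hTpos q]
              exact mul_le_mul_of_nonneg_right this (hS0 q)
          _ ≤ (T q * T (q + 1)) * S q :=
              mul_le_mul_of_nonneg_right (hcontrkey q hq) (hS0 q)
          _ = T q * (T (q + 1) * S q) := by ring
      exact le_of_mul_le_mul_left step1 hTq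
    have hother : T (q + 1) * d (q + 1) ^ 2 ≤ T (q + 1) * S q :=
      mul_le_mul_of_nonneg_left (hSu q) (hTpos (q+1)).le
    simp only [hSdef]
    exact max_le hmain hother
  -- induction from 800
  set Cst : ℝ := S 800 / W 800 with hCdef
  have hCst0 : 0 ≤ Cst := div_nonneg (hS0 800) (hWpos 800).le
  have hind : ∀ r : ℕ, S (800 + r) ≤ Cst * W (800 + r) := by
    intro r
    induction r with
    | zero =>
      simp only [Nat.add_zero]
      rw [hCdef, div_mul_cancel₀ _ (hWpos 800).ne']
    | succ r ih =>
      have h1 : S (800 + r + 1) ≤ T (800 + r + 1) * S (800 + r) :=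
        hScontr (800 + r) (by omega)
      have h2 : T (800 + r + 1) * S (800 + r) ≤ T (800 + r + 1) * (Cst * W (800 + r)) :=
        mul_le_mul_of_nonneg_left ih (hTpos _).le
      have h3 : T (800 + r + 1) * (Cst * W (800 + r)) = Cst * W (800 + r + 1) := by
        rw [← hTW (800 + r)]; ring
      show S (800 + r + 1) ≤ Cst * W (800 + r + 1)
      linarith
  -- final comparison
  have hbound : ∀ p : ℕ, d (p + 801) ^ 2 ≤ Cst * ((p:ℝ) + 1) ^ (-((5:ℝ)/4)) := by
    intro p
    have e : p + 801 = (800 + p) + 1 := by omega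
    have h1 : d (p + 801) ^ 2 ≤ S (800 + p) := by rw [e]; exact hSu (800 + p)
    have h2 : S (800 + p) ≤ Cst * W (800 + p) := hind p
    have h3 : W (800 + p) ≤ ((p:ℝ) + 1) ^ (-((5:ℝ)/4)) := by
      simp only [hWdef]
      have hp1 : (0:ℝ) < (p:ℝ) + 1 := by positivity
      have hge : (p:ℝ) + 1 ≤ g (800 + p) + k := by
        have h0 : (0:ℝ) ≤ (800:ℝ) + (p:ℝ) := by positivity
        have hpk : 3 * ((800:ℝ) + (p:ℝ)) ≤ ((800:ℝ) + (p:ℝ)) * (k:ℝ) := by nlinarith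
        simp only [hgdef]; push_cast
        linarith [Nat.cast_nonneg (α := ℝ) i]
      rw [Real.rpow_neg hp1.le, Real.rpow_neg (by linarith : (0:ℝ) ≤ g (800 + p) + k)]
      refine inv_anti₀ (Real.rpow_pos_of_pos hp1 _) ?_
      exact Real.rpow_le_rpow hp1.le hge (by norm_num)
    calc d (p + 801) ^ 2 ≤ Cst * W (800 + p) := le_trans h1 h2
      _ ≤ Cst * (((p:ℝ) + 1) ^ (-((5:ℝ)/4))) := mul_le_mul_of_nonneg_left h3 hCst0
  have hsumg : Summable (fun p : ℕ => Cst * ((p:ℝ) + 1) ^ (-((5:ℝ)/4))) := by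
    have h1 : Summable (fun n : ℕ => (n:ℝ) ^ (-((5:ℝ)/4))) :=
      Real.summable_nat_rpow.mpr (by norm_num)
    have h2 := (summable_nat_add_iff 1).mpr h1
    have h3 : (fun n : ℕ => ((n + 1 : ℕ):ℝ) ^ (-((5:ℝ)/4)))
        = fun n : ℕ => ((n:ℝ) + 1) ^ (-((5:ℝ)/4)) := by
      funext n; push_cast; ring_nf
    rw [h3] at h2
    exact h2.mul_left Cst
  have hsum801 : Summable (fun p : ℕ => d (p + 801) ^ 2) :=
    Summable.of_nonneg_of_le (fun p => sq_nonneg _) hbound hsumg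
  exact (summable_nat_add_iff 801).mp hsum801
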